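/- Suppose the Brascamp–Lieb datum (B,c) satisfies BL(B,c) < ∞. Then M := ∑_{j=1}^m c_j B_j^* B_j : ℝ^n → ℝ^n is positive definite, and the m-transformation ψ(B) defined by ψ(B)_j := B_j M^{-1/2} is equivalent to B and satisfies ∑_{j=1}^m c_j ψ(B)_j^* ψ(B)_j = I_n. -/

import Mathlib

open MeasureTheory ENNReal Matrix Filter Topology

noncomputable section

/-- The space of `m`-transformations: tuples of linear maps `ℝ^n → ℝ^{n_j}`,
represented as matrices. -/
abbrev MTrans (m n : ℕ) (nd : Fin m → ℕ) := ∀ j : Fin m, Matrix (Fin (nd j)) (Fin n) ℝ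

/-- A valid input for the Brascamp–Lieb inequality: each `f j` is measurable and
has positive finite integral. -/
def IsInput {m : ℕ} {nd : Fin m → ℕ} (f : ∀ j : Fin m, (Fin (nd j) → ℝ) → ℝ≥0∞) : Prop :=
  ∀ j, Measurable (f j) ∧ 0 < ∫⁻ y, f j y ∧ ∫⁻ y, f j y < ⊤

/-- The Brascamp–Lieb ratio `BL(B,c;f)`. -/
def BLratio {m n : ℕ} {nd : Fin m → ℕ} (B : MTrans m n nd) (c : Fin m → ℝ)
    (f : ∀ j : Fin m, (Fin (nd j) → ℝ) → ℝ≥0∞) : ℝ≥0∞ :=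
  (∫⁻ x : Fin n → ℝ, ∏ j, f j (B j *ᵥ x) ^ c j) / ∏ j, (∫⁻ y, f j y) ^ c j

/-- The Brascamp–Lieb constant `BL(B,c)`. -/
def BLconst {m n : ℕ} {nd : Fin m → ℕ} (B : MTrans m n nd) (c : Fin m → ℝ) : ℝ≥0∞ :=
  ⨆ (f : ∀ j : Fin m, (Fin (nd j) → ℝ) → ℝ≥0∞) (_ : IsInput f), BLratio B c f

/-- Membership in `F(c)`: finite BL constant and projection-normalised. -/
def MemF {m n : ℕ} {nd : Fin m → ℕ} (B : MTrans m n nd) (c : Fin m → ℝ) : Prop :=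
  BLconst B c < ⊤ ∧ ∀ j, B j * (B j)ᵀ = 1

/-- Membership in `G(c)`: the datum `(B,c)` is geometric. -/
def Geometric {m n : ℕ} {nd : Fin m → ℕ} (B : MTrans m n nd) (c : Fin m → ℝ) : Prop :=
  (∀ j, B j * (B j)ᵀ = 1) ∧ ∑ j, c j • ((B j)ᵀ * B j) = 1

/-- Equivalence of `m`-transformations: `B̃_j = T_j⁻¹ B_j T` for invertible `T, T_j`. -/
def EquivTrans {m n : ℕ} {nd : Fin m → ℕ} (B Bt : MTrans m n nd) : Prop :=
  ∃ (T : Matrix (Fin n) (Fin n) ℝ) (Tj : ∀ j, Matrix (Fin (nd j)) (Fin (nd j)) ℝ),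
    IsUnit T ∧ (∀ j, IsUnit (Tj j)) ∧ ∀ j, Bt j = (Tj j)⁻¹ * B j * T

/-- The square root of a positive semidefinite matrix, as `Matrix.PosSemidef.sqrt` was
defined in Mathlib of December 2024 (removed since). -/
def Matrix.PosSemidef.sqrt {n : Type*} {𝕜 : Type*} [Fintype n] [DecidableEq n] [RCLike 𝕜]
    [PartialOrder 𝕜]     {A : Matrix n n 𝕜} (hA : A.PosSemidef) : Matrix n n 𝕜 :=
  hA.1.eigenvectorUnitary.1 * diagonal ((↑) ∘ (√·) ∘ hA.1.eigenvalues) *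
    (star hA.1.eigenvectorUnitary : Matrix n n 𝕜)

open Classical in
/-- The map `φ`: `φ(B)_j = (B_j B_j^*)^{-1/2} B_j` (defined where `B_j B_j^*` is
positive definite, and as `B_j` otherwise). -/
def phiMap {m n : ℕ} {nd : Fin m → ℕ} (B : MTrans m n nd) : MTrans m n nd := fun j =>
  if h : (B j * (B j)ᵀ).PosDef then (h.posSemidef.sqrt)⁻¹ * B j else B j

open Classical in
/-- The map `ψ`: `ψ(B)_j = B_j M^{-1/2}` with `M = ∑ c_j B_j^* B_j` (defined where `M`
is positive definite, and as `B_j` otherwise). -/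
def psiMap {m n : ℕ} {nd : Fin m → ℕ} (c : Fin m → ℝ) (B : MTrans m n nd) : MTrans m n nd :=
  fun j =>
    if h : (∑ i, c i • ((B i)ᵀ * B i)).PosDef then B j * (h.posSemidef.sqrt)⁻¹ else B j

/-- The BL scaling map `Φ = φ ∘ ψ`. -/
def PhiMap {m n : ℕ} {nd : Fin m → ℕ} (c : Fin m → ℝ) (B : MTrans m n nd) : MTrans m n nd :=
  phiMap (psiMap c B)

/-- The operator norm of a matrix, viewed as a linear map between Euclidean spaces. -/
def opNorm {a b : ℕ} (A : Matrix (Fin a) (Fin b) ℝ) : ℝ :=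
  ‖LinearMap.toContinuousLinearMap (Matrix.toEuclideanLin A)‖

lemma psd_sqrt_mul_self' {k : ℕ} {A : Matrix (Fin k) (Fin k) ℝ} (hA : A.PosSemidef) :
    hA.sqrt * hA.sqrt = A := by
  have hU := Unitary.coe_star_mul_self hA.1.eigenvectorUnitary
  conv_rhs => rw [hA.1.spectral_theorem, Unitary.conjStarAlgAut_apply]
  unfold Matrix.PosSemidef.sqrt
  simp only [Matrix.mul_assoc]
  rw [← Matrix.mul_assoc (star _ : Matrix _ _ ℝ) _, hU, Matrix.one_mul,
    ← Matrix.mul_assoc (diagonal _), diagonal_mul_diagonal]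
  congr 3
  funext i
  simp [Real.mul_self_sqrt (hA.eigenvalues_nonneg i)]

lemma psd_sqrt_transpose' {k : ℕ} {A : Matrix (Fin k) (Fin k) ℝ} (hA : A.PosSemidef) :
    (hA.sqrt)ᵀ = hA.sqrt := by
  simp [Matrix.PosSemidef.sqrt, Matrix.transpose_mul, Matrix.star_eq_conjTranspose,
    Matrix.mul_assoc]


lemma dotProduct_finsum {n : ℕ} {ι : Type*} (s : Finset ι) (x : Fin n → ℝ) (w : ι → Fin n → ℝ) :
    x ⬝ᵥ (∑ j ∈ s, w j) = ∑ j ∈ s, x ⬝ᵥ w j := by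
  simp only [dotProduct, Finset.sum_apply, Finset.mul_sum]
  rw [Finset.sum_comm]

lemma posdef_of_no_kernel {m n : ℕ} {nd : Fin m → ℕ} (c : Fin m → ℝ) (hc : ∀ j, 0 < c j)
    (B : ∀ j : Fin m, Matrix (Fin (nd j)) (Fin n) ℝ)
    (hker : ∀ v : Fin n → ℝ, v ≠ 0 → ∃ j, B j *ᵥ v ≠ 0) :
    (∑ j, c j • ((B j)ᵀ * B j)).PosDef := by
  refine posDef_iff_dotProduct_mulVec.mpr ⟨?_, ?_⟩
  · show _ = _
    rw [conjTranspose_eq_transpose_of_trivial, Matrix.transpose_sum]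
    congr 1; funext j
    rw [Matrix.transpose_smul, Matrix.transpose_mul, Matrix.transpose_transpose]
  · intro x hx
    have hcalc : star x ⬝ᵥ ((∑ j, c j • ((B j)ᵀ * B j)) *ᵥ x)
        = ∑ j, c j * ((B j *ᵥ x) ⬝ᵥ (B j *ᵥ x)) := by
      rw [show (star x : Fin n → ℝ) = x from star_trivial x]
      have hsum : (∑ j : Fin m, c j • ((B j)ᵀ * B j)) *ᵥ x
          = ∑ j : Fin m, (c j • ((B j)ᵀ * B j)) *ᵥ x := by
        have := map_sum (Matrix.mulVec.addMonoidHomLeft x)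
          (fun j : Fin m => c j • ((B j)ᵀ * B j)) Finset.univ
        exact this
      rw [hsum, dotProduct_finsum]
      congr 1; funext j
      show x ⬝ᵥ _ = _
      rw [smul_mulVec, dotProduct_smul, smul_eq_mul]
      congr 1
      rw [← Matrix.mulVec_mulVec, Matrix.dotProduct_mulVec, Matrix.vecMul_transpose]
    rw [hcalc]
    obtain ⟨j₀, hj₀⟩ := hker x hx
    have hnn : ∀ j ∈ Finset.univ, (0:ℝ) ≤ c j * ((B j *ᵥ x) ⬝ᵥ (B j *ᵥ x)) := fun j _ =>
      mul_nonneg (hc j).le (Finset.sum_nonneg fun i _ => mul_self_nonneg _)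
    refine Finset.sum_pos' hnn ⟨j₀, Finset.mem_univ _, ?_⟩
    refine mul_pos (hc j₀) ?_
    have h0 : (0:ℝ) ≤ (B j₀ *ᵥ x) ⬝ᵥ (B j₀ *ᵥ x) :=
      Finset.sum_nonneg fun i _ => mul_self_nonneg _
    rcases h0.lt_or_eq with h | h
    · exact h
    · exact absurd (dotProduct_self_eq_zero.mp h.symm) hj₀

-- algebra part
lemma normalisation_of_posdef {m n : ℕ} {nd : Fin m → ℕ} (c : Fin m → ℝ)
    (B : ∀ j : Fin m, Matrix (Fin (nd j)) (Fin n) ℝ)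
    (hM : (∑ j, c j • ((B j)ᵀ * B j)).PosDef) :
    IsUnit (hM.posSemidef.sqrt)⁻¹ ∧
    ∑ j, c j • ((B j * (hM.posSemidef.sqrt)⁻¹)ᵀ * (B j * (hM.posSemidef.sqrt)⁻¹)) = 1 := by
  set M := ∑ j, c j • ((B j)ᵀ * B j) with hMdef
  set Q := hM.posSemidef.sqrt with hQ
  have hQQ : Q * Q = M := psd_sqrt_mul_self' hM.posSemidef
  have hdetM : M.det ≠ 0 := hM.det_pos.ne'
  have hdetQ : IsUnit Q.det := by
    refine isUnit_iff_ne_zero.mpr fun h => hdetM ?_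
    rw [← hQQ, Matrix.det_mul, h, mul_zero]
  have hQunit : IsUnit Q := (Matrix.isUnit_iff_isUnit_det Q).mpr hdetQ
  have hQinvUnit : IsUnit Q⁻¹ :=
    ⟨⟨Q⁻¹, Q, Matrix.nonsing_inv_mul Q hdetQ, Matrix.mul_nonsing_inv Q hdetQ⟩, rfl⟩
  refine ⟨hQinvUnit, ?_⟩
  have hQsymm : Qᵀ = Q := by
    exact psd_sqrt_transpose' hM.posSemidef
  have hQinvT : (Q⁻¹)ᵀ = Q⁻¹ := by rw [Matrix.transpose_nonsing_inv, hQsymm]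
  calc ∑ j, c j • ((B j * Q⁻¹)ᵀ * (B j * Q⁻¹))
      = ∑ j, Q⁻¹ * (c j • ((B j)ᵀ * B j)) * Q⁻¹ := by
        congr 1; funext j
        simp only [Matrix.transpose_mul, hQinvT, mul_smul_comm, smul_mul_assoc,
          Matrix.mul_assoc]
    _ = Q⁻¹ * M * Q⁻¹ := by
        rw [hMdef, Finset.mul_sum, Finset.sum_mul]
    _ = 1 := by
        rw [← hQQ, Matrix.mul_assoc Q⁻¹ (Q * Q) Q⁻¹, Matrix.mul_assoc Q Q Q⁻¹,
          Matrix.mul_nonsing_inv Q hdetQ, Matrix.mul_one, Matrix.nonsing_inv_mul Q hdetQ]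

lemma blconst_eq_top {m n : ℕ} {nd : Fin m → ℕ} (B : MTrans m n nd) (c : Fin m → ℝ)
    (hc : ∀ j, 0 < c j) (v : Fin n → ℝ) (hv : v ≠ 0) (hBv : ∀ j, B j *ᵥ v = 0) :
    BLconst B c = ⊤ := by
  classical
  set f : ∀ j : Fin m, (Fin (nd j) → ℝ) → ℝ≥0∞ :=
    fun j => (Metric.ball (0 : Fin (nd j) → ℝ) 1).indicator 1 with hf
  have hint : ∀ j, ∫⁻ y, f j y = volume (Metric.ball (0 : Fin (nd j) → ℝ) 1) := fun j =>
    lintegral_indicator_one measurableSet_ball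
  have hinput : IsInput f := by
    intro j
    refine ⟨measurable_one.indicator measurableSet_ball, ?_, ?_⟩
    · rw [hint]
      exact Metric.measure_ball_pos _ _ one_pos
    · rw [hint]
      exact measure_ball_lt_top
  -- the invariant open set
  set S : Set (Fin n → ℝ) := ⋂ j, (fun x => B j *ᵥ x) ⁻¹' Metric.ball 0 1 with hS
  have hcont : ∀ j, Continuous fun x : Fin n → ℝ => B j *ᵥ x := fun j =>
    LinearMap.continuous_of_finiteDimensional (Matrix.mulVecLin (B j))
  have hSopen : IsOpen S := isOpen_iInter_of_finite fun j =>
    Metric.isOpen_ball.preimage (hcont j)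
  have h0S : (0 : Fin n → ℝ) ∈ S := by
    simp [hS, Matrix.mulVec_zero, Metric.mem_ball_self, (by norm_num : (0:ℝ) < 1)]
  obtain ⟨r, hr, hball⟩ := Metric.isOpen_iff.mp hSopen 0 h0S
  have hvpos : 0 < ‖v‖ := norm_pos_iff.mpr hv
  set ρ := min r (‖v‖ / 3) with hρ
  have hρpos : 0 < ρ := lt_min hr (by positivity)
  -- balls around k • v are in S and disjoint
  have hballS : ∀ k : ℕ, Metric.ball ((k : ℝ) • v) ρ ⊆ S := by
    intro k x hx
    have hx' : x - (k : ℝ) • v ∈ Metric.ball (0 : Fin n → ℝ) r := by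
      rw [Metric.mem_ball, dist_zero_right]
      calc ‖x - (k:ℝ) • v‖ = dist x ((k:ℝ) • v) := (dist_eq_norm _ _).symm
        _ < ρ := hx
        _ ≤ r := min_le_left _ _
    have hxS := hball hx'
    simp only [hS, Set.mem_iInter, Set.mem_preimage] at hxS ⊢
    intro j
    have := hxS j
    rwa [Matrix.mulVec_sub, Matrix.mulVec_smul, hBv, smul_zero, sub_zero] at this
  have hdisj : Pairwise (Function.onFun Disjoint
      fun k : ℕ => Metric.ball ((k : ℝ) • v) ρ) := by
    intro k l hkl
    refine Metric.ball_disjoint_ball ?_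
    have h1 : (1 : ℝ) ≤ |(k : ℝ) - (l : ℝ)| := by
      have : (k : ℤ) - (l : ℤ) ≠ 0 := sub_ne_zero.mpr (by exact_mod_cast hkl)
      have := Int.one_le_abs this
      push_cast at this ⊢
      exact_mod_cast this
    have hdist : dist ((k : ℝ) • v) ((l : ℝ) • v) = |(k : ℝ) - (l : ℝ)| * ‖v‖ := by
      rw [dist_eq_norm, ← sub_smul, norm_smul, Real.norm_eq_abs]
    rw [hdist]
    calc ρ + ρ ≤ ‖v‖ / 3 + ‖v‖ / 3 := add_le_add (min_le_right _ _) (min_le_right _ _)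
      _ ≤ 1 * ‖v‖ := by linarith
      _ ≤ |(k : ℝ) - (l : ℝ)| * ‖v‖ := by
          exact mul_le_mul_of_nonneg_right h1 hvpos.le
  have hvolS : volume S = ⊤ := by
    rw [eq_top_iff]
    calc (⊤ : ℝ≥0∞) = ∑' _ : ℕ, volume (Metric.ball (0 : Fin n → ℝ) ρ) :=
          (ENNReal.tsum_const_eq_top_of_ne_zero
            (Metric.measure_ball_pos volume 0 hρpos).ne').symm
      _ = ∑' k : ℕ, volume (Metric.ball ((k : ℝ) • v) ρ) := by
          simp [Measure.addHaar_ball_center]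
      _ = volume (⋃ k : ℕ, Metric.ball ((k : ℝ) • v) ρ) :=
          (measure_iUnion hdisj fun k => measurableSet_ball).symm
      _ ≤ volume S := measure_mono (Set.iUnion_subset hballS)
  -- numerator is infinite
  have hnum : ∫⁻ x : Fin n → ℝ, ∏ j, f j (B j *ᵥ x) ^ c j = ⊤ := by
    rw [eq_top_iff]
    calc (⊤ : ℝ≥0∞) = volume S := hvolS.symm
      _ = ∫⁻ x, S.indicator 1 x := (lintegral_indicator_one hSopen.measurableSet).symm
      _ ≤ ∫⁻ x, ∏ j, f j (B j *ᵥ x) ^ c j := by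
          refine lintegral_mono fun x => ?_
          by_cases hx : x ∈ S
          · rw [Set.indicator_of_mem hx]
            have : ∀ j, f j (B j *ᵥ x) ^ c j = 1 := by
              intro j
              have hxj : B j *ᵥ x ∈ Metric.ball (0 : Fin (nd j) → ℝ) 1 := by
                simp only [hS, Set.mem_iInter, Set.mem_preimage] at hx
                exact hx j
              rw [hf]
              simp only [Set.indicator_of_mem hxj, Pi.one_apply, ENNReal.one_rpow]
            simp [this]
          · rw [Set.indicator_of_notMem hx]
            exact zero_le
  have hden : (∏ j, (∫⁻ y, f j y) ^ c j) ≠ ⊤ := by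
    refine (ENNReal.prod_lt_top fun j _ => ?_).ne
    rw [hint]
    exact ENNReal.rpow_lt_top_of_nonneg (hc j).le measure_ball_lt_top.ne
  have hratio : BLratio B c f = ⊤ := by
    rw [BLratio, hnum]
    exact ENNReal.top_div_of_ne_top hden
  rw [eq_top_iff, ← hratio]
  exact le_iSup₂ (f := fun g (_ : IsInput g) => BLratio B c g) f hinput


theorem psi_normalisation {m n : ℕ} {nd : Fin m → ℕ} (c : Fin m → ℝ)
    (hc : ∀ j, 0 < c j) (B : MTrans m n nd) (hB : BLconst B c < ⊤) :
    (∑ j, c j • ((B j)ᵀ * B j)).PosDef ∧ EquivTrans B (psiMap c B) ∧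
      ∑ j, c j • ((psiMap c B j)ᵀ * psiMap c B j) = 1 := by
  classical
  have hker : ∀ v : Fin n → ℝ, v ≠ 0 → ∃ j, B j *ᵥ v ≠ 0 := by
    intro v hv
    by_contra h
    push_neg at h
    exact absurd (blconst_eq_top B c hc v hv h) (by simpa using hB.ne)
  have hM : (∑ j, c j • ((B j)ᵀ * B j)).PosDef := posdef_of_no_kernel c hc B hker
  obtain ⟨hQinvUnit, hnorm⟩ := normalisation_of_posdef c B hM
  have hpsi : ∀ j, psiMap c B j = B j * (hM.posSemidef.sqrt)⁻¹ := by
    intro j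
    rw [psiMap, dif_pos hM]
  refine ⟨hM, ⟨(hM.posSemidef.sqrt)⁻¹, fun j => 1, hQinvUnit, fun j => isUnit_one, ?_⟩, ?_⟩
  · intro j
    rw [hpsi j]; simp
  · simpa only [hpsi] using hnorm

end
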